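/- Let G = ℤ_{p^r} (p prime) and H a finite abelian group whose p-component has p-rank t, and let k > t. Then (1 - p^{-k})·p^{kr} ≤ ∑_{φ ∈ Hom(G,H)} |ker(φ)|^k ≤ (p^{k-t}/(p^{k-t}-1)) · p^{kr}. -/
import Mathlib

private lemma hom_eval {n : ℕ} [NeZero n] {H : Type*} [AddCommGroup H] (φ : ZMod n →+ H)
    (x : ZMod n) : φ x = x.val • φ 1 := by
  conv_lhs => rw [show x = x.val • (1 : ZMod n) by
    rw [nsmul_eq_mul, mul_one, ZMod.natCast_val, ZMod.cast_id]]
  rw [map_nsmul]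

private lemma hom_inj {n : ℕ} [NeZero n] {H : Type*} [AddCommGroup H] :
    Function.Injective (fun φ : ZMod n →+ H => φ 1) := by
  intro φ ψ h
  simp only at h
  ext x
  rw [hom_eval φ x, h, ← hom_eval ψ x]

private lemma hom_range {n : ℕ} [NeZero n] {H : Type*} [AddCommGroup H] (φ : ZMod n →+ H) :
    φ.range = AddSubgroup.zmultiples (φ 1) := by
  ext h
  rw [AddMonoidHom.mem_range, AddSubgroup.mem_zmultiples_iff]
  constructor
  · rintro ⟨x, rfl⟩
    exact ⟨x.val, by rw [natCast_zsmul]; exact (hom_eval φ x).symm⟩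
  · rintro ⟨m, rfl⟩
    exact ⟨m • 1, by rw [map_zsmul]⟩

private lemma card_ker_mul {n : ℕ} [NeZero n] {H : Type*} [AddCommGroup H] [Fintype H]
    (φ : ZMod n →+ H) : Nat.card φ.ker * addOrderOf (φ 1) = n := by
  have h1 := AddSubgroup.card_eq_card_quotient_mul_card_addSubgroup φ.ker
  have h2 : Nat.card (ZMod n ⧸ φ.ker) = Nat.card φ.range :=
    Nat.card_congr (QuotientAddGroup.quotientKerEquivRange φ).toEquiv
  rw [h2, hom_range, Nat.card_zmultiples] at h1
  rw [mul_comm, ← h1, Nat.card_zmod]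

private lemma ord_dvd {n : ℕ} [NeZero n] {H : Type*} [AddCommGroup H] (φ : ZMod n →+ H) :
    addOrderOf (φ 1) ∣ n := by
  apply addOrderOf_dvd_of_nsmul_eq_zero
  rw [← map_nsmul, nsmul_eq_mul, mul_one, ZMod.natCast_self, map_zero]

private lemma card_torsion_zmod {m : ℕ} [NeZero m] {j : ℕ} (hj : 0 < j) :
    Nat.card {x : ZMod m // j • x = 0} ≤ j := by
  classical
  rw [Nat.card_eq_fintype_card, Fintype.card_subtype]
  exact IsAddCyclic.card_nsmul_eq_zero_le hj

private lemma card_torsion_le (p : ℕ) (hp : p.Prime) (t : ℕ) (H : Type*) [AddCommGroup H]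
    [Fintype H] (b : Fin t → ℕ) (K : Type*) [AddCommGroup K] [Fintype K]
    (hK : ¬ p ∣ Nat.card K) (e : H ≃+ (∀ i : Fin t, ZMod (p ^ b i)) × K) (j : ℕ) :
    Nat.card {h : H // p ^ j • h = 0} ≤ (p ^ j) ^ t := by
  classical
  have hpj : 0 < p ^ j := pow_pos hp.pos j
  have hne : ∀ i, NeZero (p ^ b i) := fun i => ⟨pow_ne_zero _ hp.ne_zero⟩
  have hsnd : ∀ h : H, p ^ j • h = 0 → (e h).2 = 0 := by
    intro h hh
    have h2 : p ^ j • (e h).2 = 0 := by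
      have h0 : p ^ j • e h = 0 := by rw [← map_nsmul, hh, map_zero]
      calc p ^ j • (e h).2 = (p ^ j • e h).2 := rfl
        _ = 0 := by rw [h0]; simp
    have hd1 : addOrderOf (e h).2 ∣ p ^ j := addOrderOf_dvd_of_nsmul_eq_zero h2
    have hd2 : addOrderOf (e h).2 ∣ Nat.card K := by
      rw [Nat.card_eq_fintype_card]; exact addOrderOf_dvd_card
    have hcop : Nat.Coprime (p ^ j) (Nat.card K) :=
      Nat.Coprime.pow_left _ ((Nat.Prime.coprime_iff_not_dvd hp).mpr hK)
    have h1 : addOrderOf (e h).2 = 1 :=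
      Nat.dvd_one.mp (hcop ▸ Nat.dvd_gcd hd1 hd2)
    exact AddMonoid.addOrderOf_eq_one_iff.mp h1
  set T : Fin t → Type _ := fun i => {x : ZMod (p ^ b i) // p ^ j • x = 0} with hT
  have hfin : ∀ i, Finite (T i) := fun i => by
    haveI := hne i; infer_instance
  haveI : Finite (∀ i, T i) := @Pi.finite _ _ _ hfin
  have hfst : ∀ h : {h : H // p ^ j • h = 0}, ∀ i, p ^ j • (e h.1).1 i = 0 := by
    intro h i
    have h0 : p ^ j • e h.1 = 0 := by rw [← map_nsmul, h.2, map_zero]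
    calc p ^ j • (e h.1).1 i = ((p ^ j • e h.1).1) i := rfl
      _ = 0 := by rw [h0]; rfl
  let F : {h : H // p ^ j • h = 0} → ∀ i, T i := fun h i => ⟨(e h.1).1 i, hfst h i⟩
  have hinj : Function.Injective F := by
    intro h1 h2 hF
    apply Subtype.ext
    apply e.injective
    apply Prod.ext
    · funext i; exact congrArg Subtype.val (congrFun hF i)
    · rw [hsnd _ h1.2, hsnd _ h2.2]
  calc Nat.card {h : H // p ^ j • h = 0} ≤ Nat.card (∀ i, T i) :=
        Nat.card_le_card_of_injective F hinj
    _ = ∏ i, Nat.card (T i) := Nat.card_pi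
    _ ≤ ∏ _i : Fin t, p ^ j := Finset.prod_le_prod' (fun i _ => by
        haveI := hne i; exact card_torsion_zmod hpj)
    _ = (p ^ j) ^ t := by simp

/-- Let `G = ℤ_{p^r}` (`p` prime) and `H` a finite abelian group whose
`p`-component has `p`-rank `t` (i.e. `H ≅ (⊕_{i<t} ℤ_{p^{b_i}}) × K` with each `b_i ≥ 1`
and `p ∤ |K|`), and let `k > t`. Then
`(1 - p^{-k})·p^{kr} ≤ ∑_{φ ∈ Hom(G,H)} |ker φ|^k ≤ (p^{k-t}/(p^{k-t}-1))·p^{kr}`. -/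
theorem gamma_bounds_bounded_rank
    (p : ℕ) (hp : p.Prime) (r k t : ℕ) (hkt : t < k)
    (H : Type*) [AddCommGroup H] [Fintype H]
    (b : Fin t → ℕ) (hb : ∀ i, 1 ≤ b i)
    (K : Type*) [AddCommGroup K] [Fintype K] (hK : ¬ p ∣ Nat.card K)
    (e : H ≃+ (∀ i : Fin t, ZMod (p ^ b i)) × K)
    [Fintype (ZMod (p ^ r) →+ H)] :
    (1 - ((p : ℝ) ^ k)⁻¹) * (p : ℝ) ^ (k * r)
        ≤ ∑ φ : ZMod (p ^ r) →+ H, ((Nat.card φ.ker : ℝ)) ^ k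
    ∧ (∑ φ : ZMod (p ^ r) →+ H, ((Nat.card φ.ker : ℝ)) ^ k)
        ≤ ((p : ℝ) ^ (k - t) / ((p : ℝ) ^ (k - t) - 1)) * (p : ℝ) ^ (k * r) := by
  classical
  haveI : NeZero (p ^ r) := ⟨pow_ne_zero _ hp.ne_zero⟩
  have hp1 : (1:ℝ) < (p:ℝ) := by exact_mod_cast hp.one_lt
  have hppos : (0:ℝ) < (p:ℝ) := lt_trans zero_lt_one hp1
  set S := ∑ φ : ZMod (p ^ r) →+ H, ((Nat.card φ.ker : ℝ)) ^ k with hS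
  have hzero : (Nat.card (0 : ZMod (p ^ r) →+ H).ker : ℝ) ^ k = (p:ℝ) ^ (k * r) := by
    have hk0 : (0 : ZMod (p ^ r) →+ H).ker = ⊤ := by
      ext x; simp [AddMonoidHom.mem_ker]
    rw [hk0, show Nat.card (⊤ : AddSubgroup (ZMod (p ^ r))) = p ^ r by
      rw [Nat.card_congr (AddSubgroup.topEquiv.toEquiv), Nat.card_zmod]]
    push_cast
    rw [← pow_mul, mul_comm r k]
  constructor
  · -- lower bound
    have h1 : (p:ℝ) ^ (k * r) ≤ S := by
      rw [← hzero, hS]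
      exact Finset.single_le_sum (f := fun φ : ZMod (p ^ r) →+ H => ((Nat.card φ.ker : ℝ)) ^ k)
        (fun i _ => by positivity) (Finset.mem_univ 0)
    have hinv : (0:ℝ) ≤ ((p:ℝ) ^ k)⁻¹ := by positivity
    have h2 : (1 - ((p:ℝ) ^ k)⁻¹) * (p:ℝ) ^ (k * r) ≤ (p:ℝ) ^ (k * r) := by
      have hle : (1 - ((p:ℝ) ^ k)⁻¹) ≤ 1 := by linarith
      have hnn : (0:ℝ) ≤ (p:ℝ) ^ (k * r) := by positivity
      nlinarith
    exact h2.trans h1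
  · -- upper bound
    have hgex : ∀ φ : ZMod (p ^ r) →+ H, ∃ j ≤ r, addOrderOf (φ 1) = p ^ j := fun φ =>
      (Nat.dvd_prime_pow hp).mp (ord_dvd φ)
    set g : (ZMod (p ^ r) →+ H) → ℕ := fun φ => Nat.log p (addOrderOf (φ 1)) with hg
    have hgspec : ∀ φ, g φ ≤ r ∧ addOrderOf (φ 1) = p ^ (g φ) := by
      intro φ
      obtain ⟨j, hj, hord⟩ := hgex φ
      have hgj : g φ = j := by
        rw [hg]; simp only; rw [hord, Nat.log_pow hp.one_lt]
      exact ⟨hgj ▸ hj, hgj ▸ hord⟩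
    have hker : ∀ φ : ZMod (p ^ r) →+ H, Nat.card φ.ker = p ^ (r - g φ) := by
      intro φ
      have h1 := card_ker_mul φ
      rw [(hgspec φ).2] at h1
      have h2 : p ^ (r - g φ) * p ^ (g φ) = p ^ r := by
        rw [← pow_add, Nat.sub_add_cancel (hgspec φ).1]
      exact Nat.eq_of_mul_eq_mul_right (pow_pos hp.pos _) (h1.trans h2.symm)
    have hsum : S = ∑ j ∈ Finset.range (r + 1),
        ∑ φ ∈ Finset.univ.filter (fun φ : ZMod (p ^ r) →+ H => g φ = j),
          ((Nat.card φ.ker : ℝ)) ^ k := by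
      rw [hS]
      exact (Finset.sum_fiberwise_of_maps_to
        (fun φ _ => Finset.mem_range.mpr (Nat.lt_succ_of_le (hgspec φ).1)) _).symm
    have hinner : ∀ j ∈ Finset.range (r + 1),
        (∑ φ ∈ Finset.univ.filter (fun φ : ZMod (p ^ r) →+ H => g φ = j),
          ((Nat.card φ.ker : ℝ)) ^ k)
          ≤ (p:ℝ) ^ (j * t) * (p:ℝ) ^ ((r - j) * k) := by
      intro j hj
      set s := Finset.univ.filter (fun φ : ZMod (p ^ r) →+ H => g φ = j) with hs
      have hf : ∀ φ ∈ s, p ^ j • (φ 1) = 0 := by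
        intro φ hφ
        have hord : addOrderOf (φ 1) = p ^ j := by
          rw [(hgspec φ).2, (Finset.mem_filter.mp hφ).2]
        rw [← hord]
        exact addOrderOf_nsmul_eq_zero (φ 1)
      have hcard : (s.card : ℝ) ≤ (p:ℝ) ^ (j * t) := by
        have hinj : Function.Injective
            (fun φ : {φ // φ ∈ s} => (⟨φ.1 1, hf φ.1 φ.2⟩ : {h : H // p ^ j • h = 0})) := by
          intro a b hab
          exact Subtype.ext (hom_inj (congrArg Subtype.val hab))
        have hle : s.card ≤ p ^ (j * t) := by
          calc s.card = Nat.card {φ // φ ∈ s} := by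
                rw [Nat.card_eq_fintype_card, Fintype.card_coe]
            _ ≤ Nat.card {h : H // p ^ j • h = 0} := Nat.card_le_card_of_injective _ hinj
            _ ≤ (p ^ j) ^ t := card_torsion_le p hp t H b K hK e j
            _ = p ^ (j * t) := by rw [← pow_mul]
        calc (s.card : ℝ) ≤ ((p ^ (j * t) : ℕ) : ℝ) := by exact_mod_cast hle
          _ = (p:ℝ) ^ (j * t) := by push_cast; ring
      have hterm : ∀ φ ∈ s, ((Nat.card φ.ker : ℝ)) ^ k = (p:ℝ) ^ ((r - j) * k) := by
        intro φ hφ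
        rw [hker φ, (Finset.mem_filter.mp hφ).2]
        push_cast
        rw [← pow_mul]
      rw [Finset.sum_congr rfl hterm, Finset.sum_const, nsmul_eq_mul]
      have hnn : (0:ℝ) ≤ (p:ℝ) ^ ((r - j) * k) := by positivity
      exact mul_le_mul_of_nonneg_right hcard hnn
    have hS2 : S ≤ ∑ j ∈ Finset.range (r + 1), (p:ℝ) ^ (j * t) * (p:ℝ) ^ ((r - j) * k) := by
      rw [hsum]
      exact Finset.sum_le_sum hinner
    set c : ℝ := (p:ℝ) ^ (k - t) with hc
    have hc2 : (2:ℝ) ≤ c := by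
      calc (2:ℝ) ≤ (p:ℝ) := by exact_mod_cast hp.two_le
        _ ≤ (p:ℝ) ^ (k - t) := le_self_pow₀ (by linarith) (by omega)
    have hcpos : (0:ℝ) < c := by linarith
    have hterm2 : ∀ j ∈ Finset.range (r + 1),
        (p:ℝ) ^ (j * t) * (p:ℝ) ^ ((r - j) * k) = (p:ℝ) ^ (k * r) * (c⁻¹) ^ j := by
      intro j hj
      have hjr : j ≤ r := Nat.lt_succ_iff.mp (Finset.mem_range.mp hj)
      have hexp : j * t + (r - j) * k + j * (k - t) = k * r := by
        obtain ⟨u, rfl⟩ : ∃ u, r = j + u := ⟨r - j, by omega⟩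
        obtain ⟨v, rfl⟩ : ∃ v, k = t + v := ⟨k - t, by omega⟩
        simp only [Nat.add_sub_cancel_left]
        ring
      have hmul : (p:ℝ) ^ (j * t) * (p:ℝ) ^ ((r - j) * k) * (p:ℝ) ^ (j * (k - t))
          = (p:ℝ) ^ (k * r) := by
        rw [← pow_add, ← pow_add, hexp]
      have hcinv : (c⁻¹) ^ j = ((p:ℝ) ^ (j * (k - t)))⁻¹ := by
        rw [hc, inv_pow, ← pow_mul, mul_comm (k - t) j]
      have hpne : ((p:ℝ) ^ (j * (k - t))) ≠ 0 := by positivity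
      rw [hcinv, eq_mul_inv_iff_mul_eq₀ hpne]
      exact hmul
    have hgeom : ∑ j ∈ Finset.range (r + 1), (c⁻¹) ^ j ≤ (1 - c⁻¹)⁻¹ := by
      have h0 : (0:ℝ) ≤ c⁻¹ := by positivity
      have h1 : c⁻¹ < 1 := by
        rw [inv_lt_one_iff₀]; right; linarith
      exact le_of_le_of_eq
        (Summable.sum_le_tsum _ (fun i _ => pow_nonneg h0 i) (summable_geometric_of_lt_one h0 h1))
        (tsum_geometric_of_lt_one h0 h1)
    have hfinal : (1 - c⁻¹)⁻¹ = c / (c - 1) := by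
      rw [show (1 : ℝ) - c⁻¹ = (c - 1) / c by field_simp, inv_div]
    calc S ≤ ∑ j ∈ Finset.range (r + 1), (p:ℝ) ^ (j * t) * (p:ℝ) ^ ((r - j) * k) := hS2
      _ = ∑ j ∈ Finset.range (r + 1), (p:ℝ) ^ (k * r) * (c⁻¹) ^ j :=
          Finset.sum_congr rfl hterm2
      _ = (p:ℝ) ^ (k * r) * ∑ j ∈ Finset.range (r + 1), (c⁻¹) ^ j := by
          rw [Finset.mul_sum]
      _ ≤ (p:ℝ) ^ (k * r) * (1 - c⁻¹)⁻¹ := by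
          have : (0:ℝ) ≤ (p:ℝ) ^ (k * r) := by positivity
          exact mul_le_mul_of_nonneg_left hgeom this
      _ = (c / (c - 1)) * (p:ℝ) ^ (k * r) := by rw [hfinal]; ring
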